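/- Let T > 0 and let r, μ ∈ ℝ, σ ≠ 0, γ > 0 with γ ≠ 1, α ∉ {0,1} with α/(1−γ) > 0 and (1/α − 1)·(1−γ) ≥ 0, 0 < λ < 1, and ρ₁ ≥ ρ₂. Then the Epstein–Zin equilibrium ODE system (M-HJB) on [0,T] admits a unique positive solution (θ₁, θ₂). -/

import Mathlib

noncomputable section

/-- `S(t) = λ θ₁(t) + (1-λ) θ₂(t)`. -/
def mhjbS (lam : ℝ) (θ₁ θ₂ : ℝ → ℝ) (t : ℝ) : ℝ :=
  lam * θ₁ t + (1 - lam) * θ₂ t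

/-- `D(t) = λ θ₁(t)^β + (1-λ) θ₂(t)^β` with `β = (1-γ-α)/(1-γ)` (real powers). -/
def mhjbD (γ α lam : ℝ) (θ₁ θ₂ : ℝ → ℝ) (t : ℝ) : ℝ :=
  lam * θ₁ t ^ ((1 - γ - α) / (1 - γ)) + (1 - lam) * θ₂ t ^ ((1 - γ - α) / (1 - γ))

/-- `C(t) = S(t)^{1/(α-1)} D(t)^{-1/(α-1)}` (real powers). -/
def mhjbC (γ α lam : ℝ) (θ₁ θ₂ : ℝ → ℝ) (t : ℝ) : ℝ :=
  mhjbS lam θ₁ θ₂ t ^ ((1 : ℝ) / (α - 1)) * mhjbD γ α lam θ₁ θ₂ t ^ (-((1 : ℝ) / (α - 1)))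

/-- A positive solution of the Epstein–Zin equilibrium ODE system (M-HJB) on `[t₀, T]`:
differentiable positive functions `θ₁, θ₂` with continuous derivatives `θ₁', θ₂'` such that,
for `i = 1, 2` and all `t ∈ [t₀, T]`,
`θᵢ'(t) + (1-γ)θᵢ(t)[r + (μ-r)²/(2γσ²) - C(t)] - (1-γ)ρᵢ α⁻¹ θᵢ(t)
  + α⁻¹(1-γ) θᵢ(t)^β S(t)^{α/(α-1)} D(t)^{-α/(α-1)} = 0`,
with terminal conditions `θ₁(T) = θ₂(T) = 1`. -/
def IsMHJBSolution (r μ σ ρ₁ ρ₂ γ α lam t₀ T : ℝ) (θ₁ θ₂ : ℝ → ℝ) : Prop :=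
  ∃ θ₁' θ₂' : ℝ → ℝ,
    ContinuousOn θ₁' (Set.Icc t₀ T) ∧ ContinuousOn θ₂' (Set.Icc t₀ T) ∧
    (∀ t ∈ Set.Icc t₀ T, HasDerivWithinAt θ₁ (θ₁' t) (Set.Icc t₀ T) t) ∧
    (∀ t ∈ Set.Icc t₀ T, HasDerivWithinAt θ₂ (θ₂' t) (Set.Icc t₀ T) t) ∧
    (∀ t ∈ Set.Icc t₀ T, 0 < θ₁ t) ∧ (∀ t ∈ Set.Icc t₀ T, 0 < θ₂ t) ∧
    θ₁ T = 1 ∧ θ₂ T = 1 ∧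
    (∀ t ∈ Set.Icc t₀ T,
      θ₁' t
        + (1 - γ) * θ₁ t * (r + (μ - r) ^ 2 / (2 * γ * σ ^ 2) - mhjbC γ α lam θ₁ θ₂ t)
        - (1 - γ) * ρ₁ * α⁻¹ * θ₁ t
        + α⁻¹ * (1 - γ) * θ₁ t ^ ((1 - γ - α) / (1 - γ))
          * mhjbS lam θ₁ θ₂ t ^ (α / (α - 1))
          * mhjbD γ α lam θ₁ θ₂ t ^ (-(α / (α - 1))) = 0) ∧
    (∀ t ∈ Set.Icc t₀ T,
      θ₂' t
        + (1 - γ) * θ₂ t * (r + (μ - r) ^ 2 / (2 * γ * σ ^ 2) - mhjbC γ α lam θ₁ θ₂ t)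
        - (1 - γ) * ρ₂ * α⁻¹ * θ₂ t
        + α⁻¹ * (1 - γ) * θ₂ t ^ ((1 - γ - α) / (1 - γ))
          * mhjbS lam θ₁ θ₂ t ^ (α / (α - 1))
          * mhjbD γ α lam θ₁ θ₂ t ^ (-(α / (α - 1))) = 0)

end



open Set Filter Real

namespace EZaux

/-- clamp a real number into `[a,b]`. -/
def cl (a b y : ℝ) : ℝ := max a (min b y)

/-- clamp a pair into a box. -/
def clampB (a b : ℝ) (x : ℝ × ℝ) : ℝ × ℝ := (cl a b x.1, cl a b x.2)

/-- the function `P = S/D`. -/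
noncomputable def pfun (lam m : ℝ) (x : ℝ × ℝ) : ℝ :=
  (lam * x.1 ^ m + (1 - lam) * x.2 ^ m) /
    (lam * x.1 ^ (m - 1) + (1 - lam) * x.2 ^ (m - 1))

/-- the (time-reversed) vector field of the `h`-system. -/
noncomputable def vf (A ρ₁ ρ₂ α lam m : ℝ) (x : ℝ × ℝ) : ℝ × ℝ :=
  ((α * A - ρ₁ - α * pfun lam m x ^ ((1:ℝ)/(α-1))) * x.1 + pfun lam m x ^ (α/(α-1)),
   (α * A - ρ₂ - α * pfun lam m x ^ ((1:ℝ)/(α-1))) * x.2 + pfun lam m x ^ (α/(α-1)))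

lemma cl_le {a b y : ℝ} (hab : a ≤ b) : cl a b y ≤ b := max_le hab (min_le_left _ _)

lemma le_cl (a b y : ℝ) : a ≤ cl a b y := le_max_left _ _

lemma cl_eq {a b y : ℝ} (h1 : a ≤ y) (h2 : y ≤ b) : cl a b y = y := by
  rw [cl, min_eq_right h2, max_eq_right h1]

lemma min_le_cl {a b y : ℝ} : min b y ≤ cl a b y := le_max_right _ _

lemma cl_lip (a b : ℝ) : LipschitzWith 1 (cl a b) := by
  apply LipschitzWith.of_dist_le_mul
  intro x y
  rw [Real.dist_eq, Real.dist_eq, NNReal.coe_one, one_mul]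
  calc |cl a b x - cl a b y| = |max (min b x) a - max (min b y) a| := by
        rw [cl, cl, max_comm a _, max_comm a _]
    _ ≤ |min b x - min b y| := abs_max_sub_max_le_abs _ _ _
    _ ≤ max |b - b| |x - y| := abs_min_sub_min_le_max b x b y
    _ = |x - y| := by simp

lemma clampB_lip (a b : ℝ) : LipschitzWith 1 (clampB a b) := by
  apply LipschitzWith.of_dist_le_mul
  intro x y
  rw [Prod.dist_eq, Prod.dist_eq, NNReal.coe_one, one_mul]
  exact max_le_max ((cl_lip a b).dist_le_mul x.1 y.1 |>.trans (by simp))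
    ((cl_lip a b).dist_le_mul x.2 y.2 |>.trans (by simp))

lemma clampB_mem {a b : ℝ} (hab : a ≤ b) (x : ℝ × ℝ) :
    clampB a b x ∈ Icc (a, a) (b, b) := by
  constructor
  · exact ⟨le_cl a b x.1, le_cl a b x.2⟩
  · exact ⟨cl_le hab, cl_le hab⟩

lemma clampB_eq {a b : ℝ} {x : ℝ × ℝ} (h1 : a ≤ x.1) (h1' : x.1 ≤ b)
    (h2 : a ≤ x.2) (h2' : x.2 ≤ b) : clampB a b x = x := by
  rw [clampB, cl_eq h1 h1', cl_eq h2 h2']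

section pbounds

variable {lam m : ℝ} (hl0 : 0 < lam) (hl1 : lam < 1)

include hl0 hl1 in
lemma comb_pos {x : ℝ × ℝ} (h1 : 0 < x.1) (h2 : 0 < x.2) (e : ℝ) :
    0 < lam * x.1 ^ e + (1 - lam) * x.2 ^ e :=
  add_pos (mul_pos hl0 (Real.rpow_pos_of_pos h1 e))
    (mul_pos (by linarith) (Real.rpow_pos_of_pos h2 e))

lemma rpow_split {x : ℝ} (hx : 0 < x) (m : ℝ) : x ^ m = x ^ (m - 1) * x := by
  rw [← Real.rpow_add_one (ne_of_gt hx) (m - 1)]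
  congr 1; ring

include hl0 hl1 in
lemma pfun_pos {x : ℝ × ℝ} (h1 : 0 < x.1) (h2 : 0 < x.2) : 0 < pfun lam m x :=
  div_pos (comb_pos hl0 hl1 h1 h2 m) (comb_pos hl0 hl1 h1 h2 (m - 1))

include hl0 hl1 in
lemma pfun_le_max {x : ℝ × ℝ} (h1 : 0 < x.1) (h2 : 0 < x.2) {M : ℝ}
    (hM1 : x.1 ≤ M) (hM2 : x.2 ≤ M) : pfun lam m x ≤ M := by
  have hD := comb_pos hl0 hl1 h1 h2 (m - 1)
  rw [pfun, div_le_iff₀ hD]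
  rw [rpow_split h1 m, rpow_split h2 m]
  have p1 : (0:ℝ) ≤ lam * x.1 ^ (m - 1) := le_of_lt (mul_pos hl0 (Real.rpow_pos_of_pos h1 _))
  have p2 : (0:ℝ) ≤ (1 - lam) * x.2 ^ (m - 1) :=
    le_of_lt (mul_pos (by linarith) (Real.rpow_pos_of_pos h2 _))
  nlinarith [mul_le_mul_of_nonneg_left hM1 p1, mul_le_mul_of_nonneg_left hM2 p2]

include hl0 hl1 in
lemma le_pfun {x : ℝ × ℝ} (h1 : 0 < x.1) (h2 : 0 < x.2) {c : ℝ}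
    (hc1 : c ≤ x.1) (hc2 : c ≤ x.2) : c ≤ pfun lam m x := by
  have hD := comb_pos hl0 hl1 h1 h2 (m - 1)
  rw [pfun, le_div_iff₀ hD]
  rw [rpow_split h1 m, rpow_split h2 m]
  have p1 : (0:ℝ) ≤ lam * x.1 ^ (m - 1) := le_of_lt (mul_pos hl0 (Real.rpow_pos_of_pos h1 _))
  have p2 : (0:ℝ) ≤ (1 - lam) * x.2 ^ (m - 1) :=
    le_of_lt (mul_pos (by linarith) (Real.rpow_pos_of_pos h2 _))
  nlinarith [mul_le_mul_of_nonneg_left hc1 p1, mul_le_mul_of_nonneg_left hc2 p2]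

lemma pfun_swap (lam m : ℝ) (x₁ x₂ : ℝ) :
    pfun lam m (x₁, x₂) = pfun (1 - lam) m (x₂, x₁) := by
  simp only [pfun]
  ring_nf

end pbounds

end EZaux

namespace EZaux

lemma vf_contDiffAt (A ρ₁ ρ₂ α lam m : ℝ) (hl0 : 0 < lam) (hl1 : lam < 1) {x : ℝ × ℝ}
    (h1 : 0 < x.1) (h2 : 0 < x.2) : ContDiffAt ℝ 1 (vf A ρ₁ ρ₂ α lam m) x := by
  have hP : ContDiffAt ℝ 1 (pfun lam m) x := by
    have hp1 : ContDiffAt ℝ 1 (fun y : ℝ × ℝ => y.1 ^ m) x :=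
      contDiffAt_fst.rpow_const_of_ne (ne_of_gt h1)
    have hp2 : ContDiffAt ℝ 1 (fun y : ℝ × ℝ => y.2 ^ m) x :=
      contDiffAt_snd.rpow_const_of_ne (ne_of_gt h2)
    have hq1 : ContDiffAt ℝ 1 (fun y : ℝ × ℝ => y.1 ^ (m - 1)) x :=
      contDiffAt_fst.rpow_const_of_ne (ne_of_gt h1)
    have hq2 : ContDiffAt ℝ 1 (fun y : ℝ × ℝ => y.2 ^ (m - 1)) x :=
      contDiffAt_snd.rpow_const_of_ne (ne_of_gt h2)
    exact ((contDiffAt_const.mul hp1).add (contDiffAt_const.mul hp2)).div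
      ((contDiffAt_const.mul hq1).add (contDiffAt_const.mul hq2))
      (ne_of_gt (comb_pos hl0 hl1 h1 h2 (m - 1)))
  have hPx : 0 < pfun lam m x := pfun_pos hl0 hl1 h1 h2
  have hPq : ContDiffAt ℝ 1 (fun y => pfun lam m y ^ ((1:ℝ)/(α-1))) x :=
    hP.rpow_const_of_ne (ne_of_gt hPx)
  have hPq2 : ContDiffAt ℝ 1 (fun y => pfun lam m y ^ (α/(α-1))) x :=
    hP.rpow_const_of_ne (ne_of_gt hPx)
  exact (((contDiffAt_const.sub (contDiffAt_const.mul hPq)).mul contDiffAt_fst).add hPq2).prodMk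
    (((contDiffAt_const.sub (contDiffAt_const.mul hPq)).mul contDiffAt_snd).add hPq2)

/-- A `C¹` function on the open positive quadrant is Lipschitz on a compact box. -/
lemma exists_lipschitzOnWith_box {F : ℝ × ℝ → ℝ × ℝ}
    (hF : ∀ x : ℝ × ℝ, 0 < x.1 → 0 < x.2 → ContDiffAt ℝ 1 F x)
    {a b : ℝ} (ha : 0 < a) :
    ∃ K : NNReal, LipschitzOnWith K F (Icc (a, a) (b, b)) := by
  set U : Set (ℝ × ℝ) := {y : ℝ × ℝ | 0 < y.1 ∧ 0 < y.2} with hU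
  have hUopen : IsOpen U :=
    (isOpen_lt continuous_const continuous_fst).inter (isOpen_lt continuous_const continuous_snd)
  have hQU : Icc ((a:ℝ), (a:ℝ)) (b, b) ⊆ U := by
    rintro y ⟨⟨hy1, hy2⟩, -⟩
    exact ⟨lt_of_lt_of_le ha hy1, lt_of_lt_of_le ha hy2⟩
  have hFd : ContDiffOn ℝ 1 F U := fun y hy => (hF y hy.1 hy.2).contDiffWithinAt
  have hfc : ContinuousOn (fun y => fderiv ℝ F y) U :=
    hFd.continuousOn_fderiv_of_isOpen hUopen le_rfl
  have hQc : IsCompact (Icc ((a:ℝ), (a:ℝ)) (b, b)) := isCompact_Icc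
  obtain ⟨M, hM⟩ := hQc.exists_bound_of_continuousOn (hfc.mono hQU)
  refine ⟨⟨max M 0, le_max_right _ _⟩, ?_⟩
  have hconv : Convex ℝ (Icc ((a:ℝ), (a:ℝ)) (b, b)) := by
    rw [Icc_prod_eq]
    exact (convex_Icc a b).prod (convex_Icc a b)
  apply hconv.lipschitzOnWith_of_nnnorm_fderiv_le
    (fun y hy => (hF y (hQU hy).1 (hQU hy).2).differentiableAt one_ne_zero)
  intro y hy
  have := hM y hy
  have h2 : ‖fderiv ℝ F y‖ ≤ max M 0 := this.trans (le_max_left _ _)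
  refine NNReal.coe_le_coe.1 ?_; show ‖fderiv ℝ F y‖ ≤ max M 0
  exact h2

/-- From a derivative within `Icc a b` to a derivative within `Ici x`, for `x ∈ Ico a b`. -/
lemma hasDerivWithinAt_Ici_of_Icc {E : Type*} [NormedAddCommGroup E] [NormedSpace ℝ E]
    {F : ℝ → E} {d : E} {a b x : ℝ} (hx : x ∈ Ico a b)
    (h : HasDerivWithinAt F d (Icc a b) x) : HasDerivWithinAt F d (Ici x) x := by
  have h1 : HasDerivWithinAt F d (Icc x b) x := h.mono (Icc_subset_Icc hx.1 le_rfl)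
  have hset : Icc x b =ᶠ[nhds x] Ici x := by
    rw [Filter.eventuallyEq_set]
    filter_upwards [Iio_mem_nhds hx.2] with y hy
    exact ⟨fun h => h.1, fun h => ⟨h, le_of_lt hy⟩⟩
  exact (hasDerivWithinAt_congr_set hset).1 h1

end EZaux

namespace EZaux

/-- Two-function barrier ("fencing") lemma: if whenever a component touches the barrier `B`
(with the other one below it) its derivative is strictly below `B'`, then both components
stay below `B`. -/
lemma barrier_max {H₁ H₂ d₁ d₂ B B' : ℝ → ℝ} {a b : ℝ}
    (hc₁ : ContinuousOn H₁ (Icc a b)) (hc₂ : ContinuousOn H₂ (Icc a b))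
    (hd₁ : ∀ x ∈ Ico a b, HasDerivWithinAt H₁ (d₁ x) (Ici x) x)
    (hd₂ : ∀ x ∈ Ico a b, HasDerivWithinAt H₂ (d₂ x) (Ici x) x)
    (hB : ∀ x, HasDerivAt B (B' x) x)
    (ha₁ : H₁ a ≤ B a) (ha₂ : H₂ a ≤ B a)
    (bd₁ : ∀ x ∈ Ico a b, H₁ x = B x → H₂ x ≤ B x → d₁ x < B' x)
    (bd₂ : ∀ x ∈ Ico a b, H₂ x = B x → H₁ x ≤ B x → d₂ x < B' x) :
    ∀ x ∈ Icc a b, H₁ x ≤ B x ∧ H₂ x ≤ B x := by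
  set f : ℝ → ℝ := fun y => max (H₁ y) (H₂ y) with hf
  set f' : ℝ → ℝ := fun y =>
    if H₁ y < H₂ y then d₂ y else if H₂ y < H₁ y then d₁ y else max (d₁ y) (d₂ y) with hf'
  have hfc : ContinuousOn f (Icc a b) := hc₁.sup hc₂
  have slope₁ : ∀ x ∈ Ico a b, Tendsto (slope H₁ x) (nhdsWithin x (Ioi x)) (nhds (d₁ x)) :=
    fun x hx => (hasDerivWithinAt_iff_tendsto_slope' (lt_irrefl x)).1 (hd₁ x hx).Ioi_of_Ici
  have slope₂ : ∀ x ∈ Ico a b, Tendsto (slope H₂ x) (nhdsWithin x (Ioi x)) (nhds (d₂ x)) :=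
    fun x hx => (hasDerivWithinAt_iff_tendsto_slope' (lt_irrefl x)).1 (hd₂ x hx).Ioi_of_Ici
  have key : ∀ x ∈ Icc a b, f x ≤ B x := by
    apply image_le_of_liminf_slope_right_lt_deriv_boundary (f' := f') hfc ?slopecond
      (max_le ha₁ ha₂) hB ?boundcond
    case slopecond => -- liminf slope condition
      intro x hx r hr
      have hxI : x ∈ Icc a b := Ico_subset_Icc_self hx
      haveI : (nhdsWithin x (Ioi x)).NeBot := nhdsGT_neBot x
      rcases lt_trichotomy (H₁ x) (H₂ x) with h12 | heq | h21
      · have hrd : d₂ x < r := by simpa [hf', if_pos h12] using hr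
        have h₁ : ∀ᶠ z in nhdsWithin x (Ioi x), slope H₂ x z < r :=
          slope₂ x hx (Iio_mem_nhds hrd)
        have hev : ∀ᶠ z in nhdsWithin x (Ioi x), H₁ z < H₂ z := by
          have Acont : ContinuousWithinAt (fun z => (H₁ z, H₂ z)) (Icc a b) x :=
            (hc₁ x hxI).prodMk (hc₂ x hxI)
          have := Acont (IsOpen.mem_nhds (isOpen_lt continuous_fst continuous_snd) h12)
          exact nhdsWithin_le_of_mem (Icc_mem_nhdsGT_of_mem hx) this
        refine ((h₁.and hev).mono ?_).frequently
        rintro z ⟨hs, hlt⟩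
        have : slope f x z = slope H₂ x z := by
          rw [slope_def_field, slope_def_field]
          rw [show f z = H₂ z from max_eq_right hlt.le, show f x = H₂ x from max_eq_right h12.le]
        rwa [this]
      · -- equal case
        have hrd : max (d₁ x) (d₂ x) < r := by
          simpa [hf', if_neg (lt_irrefl (H₁ x)), heq] using hr
        have h₁ : ∀ᶠ z in nhdsWithin x (Ioi x), slope H₁ x z < r :=
          slope₁ x hx (Iio_mem_nhds ((le_max_left _ _).trans_lt hrd))
        have h₂ : ∀ᶠ z in nhdsWithin x (Ioi x), slope H₂ x z < r :=
          slope₂ x hx (Iio_mem_nhds ((le_max_right _ _).trans_lt hrd))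
        have h₃ : ∀ᶠ z in nhdsWithin x (Ioi x), x < z := self_mem_nhdsWithin
        refine (((h₁.and h₂).and h₃).mono ?_).frequently
        rintro z ⟨⟨hs1, hs2⟩, hz⟩
        have hfx1 : f x = H₁ x := by rw [hf]; exact max_eq_left heq.ge
        have : slope f x z = max (slope H₁ x z) (slope H₂ x z) := by
          rw [slope_def_field, slope_def_field, slope_def_field]
          rw [max_div_div_right (le_of_lt (sub_pos.2 hz)), ← max_sub_sub_right]
          congr 2
          · rw [hfx1]
          · rw [hfx1, heq]
        rw [this]
        exact max_lt hs1 hs2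
      · have hrd : d₁ x < r := by
          simpa [hf', if_neg (not_lt.2 h21.le), if_pos h21] using hr
        have h₁ : ∀ᶠ z in nhdsWithin x (Ioi x), slope H₁ x z < r :=
          slope₁ x hx (Iio_mem_nhds hrd)
        have hev : ∀ᶠ z in nhdsWithin x (Ioi x), H₂ z < H₁ z := by
          have Acont : ContinuousWithinAt (fun z => (H₂ z, H₁ z)) (Icc a b) x :=
            (hc₂ x hxI).prodMk (hc₁ x hxI)
          have := Acont (IsOpen.mem_nhds (isOpen_lt continuous_fst continuous_snd) h21)
          exact nhdsWithin_le_of_mem (Icc_mem_nhdsGT_of_mem hx) this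
        refine ((h₁.and hev).mono ?_).frequently
        rintro z ⟨hs, hlt⟩
        have : slope f x z = slope H₁ x z := by
          rw [slope_def_field, slope_def_field]
          rw [show f z = H₁ z from max_eq_left hlt.le, show f x = H₁ x from max_eq_left h21.le]
        rwa [this]
    case boundcond => -- boundary condition
      intro x hx hfB
      have hle1 : H₁ x ≤ B x := le_trans (le_max_left _ _) hfB.le
      have hle2 : H₂ x ≤ B x := le_trans (le_max_right _ _) hfB.le
      rcases lt_trichotomy (H₁ x) (H₂ x) with h12 | heq | h21
      · have hBx : H₂ x = B x := by
          rw [← hfB, hf]; exact (max_eq_right h12.le).symm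
        simpa [hf', if_pos h12] using bd₂ x hx hBx hle1
      · have hBx1 : H₁ x = B x := by rw [← hfB, hf]; exact (max_eq_left heq.ge).symm
        have hBx2 : H₂ x = B x := by rw [← heq]; exact hBx1
        have := max_lt (bd₁ x hx hBx1 hle2) (bd₂ x hx hBx2 hle1)
        simpa [hf', if_neg (lt_irrefl (H₁ x)), heq] using this
      · have hBx : H₁ x = B x := by
          rw [← hfB, hf]; exact (max_eq_left h21.le).symm
        simpa [hf', if_neg (not_lt.2 h21.le), if_pos h21] using bd₁ x hx hBx hle2
  exact fun x hx => ⟨(le_max_left _ _).trans (key x hx), (le_max_right _ _).trans (key x hx)⟩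

end EZaux

namespace EZaux

/-- The key algebraic identity: the M-HJB expression for a component equals
`m x^(m-1)` times the corresponding `h`-system expression. -/
lemma ez_algebra (γ α lam A ρ x₁ x₂ d : ℝ)
    (hα0 : α ≠ 0) (hα1 : α - 1 ≠ 0) (hγ1 : (1:ℝ) - γ ≠ 0)
    (h1 : 0 < x₁) (h2 : 0 < x₂) (hl0 : 0 < lam) (hl1 : lam < 1) :
    ((1-γ)/α) * x₁ ^ ((1-γ)/α - 1) * d
      + (1-γ) * (x₁ ^ ((1-γ)/α)) *
        (A - ((lam * x₁ ^ ((1-γ)/α) + (1-lam) * x₂ ^ ((1-γ)/α)) ^ ((1:ℝ)/(α-1)) *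
          (lam * (x₁ ^ ((1-γ)/α)) ^ ((1-γ-α)/(1-γ)) +
            (1-lam) * (x₂ ^ ((1-γ)/α)) ^ ((1-γ-α)/(1-γ))) ^ (-((1:ℝ)/(α-1)))))
      - (1-γ) * ρ * α⁻¹ * x₁ ^ ((1-γ)/α)
      + α⁻¹ * (1-γ) * (x₁ ^ ((1-γ)/α)) ^ ((1-γ-α)/(1-γ)) *
          (lam * x₁ ^ ((1-γ)/α) + (1-lam) * x₂ ^ ((1-γ)/α)) ^ (α/(α-1)) *
          (lam * (x₁ ^ ((1-γ)/α)) ^ ((1-γ-α)/(1-γ)) +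
            (1-lam) * (x₂ ^ ((1-γ)/α)) ^ ((1-γ-α)/(1-γ))) ^ (-(α/(α-1)))
    = ((1-γ)/α) * x₁ ^ ((1-γ)/α - 1) *
        (d - (α * pfun lam ((1-γ)/α) (x₁, x₂) ^ ((1:ℝ)/(α-1)) - α * A + ρ) * x₁
          + pfun lam ((1-γ)/α) (x₁, x₂) ^ (α/(α-1))) := by
  set m : ℝ := (1-γ)/α with hm
  have hβ1 : (x₁ ^ m) ^ ((1-γ-α)/(1-γ)) = x₁ ^ (m-1) := by
    rw [← Real.rpow_mul h1.le]; congr 1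
    rw [hm]; field_simp
  have hβ2 : (x₂ ^ m) ^ ((1-γ-α)/(1-γ)) = x₂ ^ (m-1) := by
    rw [← Real.rpow_mul h2.le]; congr 1
    rw [hm]; field_simp
  rw [hβ1, hβ2]
  have hSpos : 0 < lam * x₁ ^ m + (1-lam) * x₂ ^ m :=
    comb_pos hl0 hl1 (x := (x₁, x₂)) h1 h2 m
  have hDpos : 0 < lam * x₁ ^ (m-1) + (1-lam) * x₂ ^ (m-1) :=
    comb_pos hl0 hl1 (x := (x₁, x₂)) h1 h2 (m-1)
  have hPdef : pfun lam m (x₁, x₂)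
      = (lam * x₁ ^ m + (1-lam) * x₂ ^ m) / (lam * x₁ ^ (m-1) + (1-lam) * x₂ ^ (m-1)) := rfl
  have hfrac : ∀ e : ℝ,
      (lam * x₁ ^ m + (1-lam) * x₂ ^ m) ^ e *
        (lam * x₁ ^ (m-1) + (1-lam) * x₂ ^ (m-1)) ^ (-e)
      = pfun lam m (x₁, x₂) ^ e := by
    intro e
    rw [hPdef, Real.div_rpow hSpos.le hDpos.le, Real.rpow_neg hDpos.le, div_eq_mul_inv]
  rw [hfrac]
  rw [mul_assoc (α⁻¹ * (1-γ) * x₁ ^ (m-1)), hfrac]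
  have hx : x₁ ^ m = x₁ ^ (m-1) * x₁ := rpow_split h1 m
  rw [hx]
  generalize pfun lam m (x₁, x₂) ^ ((1:ℝ)/(α-1)) = p
  generalize pfun lam m (x₁, x₂) ^ (α/(α-1)) = pp
  generalize x₁ ^ (m-1) = u
  rw [hm]
  field_simp
  ring
end EZaux

namespace EZaux

open Set

/-- Existence of a global solution of the reversed `h`-system, with positive bounds. -/
lemma existH (A ρ₁ ρ₂ α lam m T : ℝ) (hT : 0 < T) (hm0 : 0 < m)
    (hα1' : α - 1 ≠ 0) (hαlt : α < 1) (hl0 : 0 < lam) (hl1 : lam < 1) :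
    ∃ H : ℝ → ℝ × ℝ,
      H 0 = (1, 1) ∧
      (∀ s ∈ Set.Icc 0 T, HasDerivWithinAt H (vf A ρ₁ ρ₂ α lam m (H s)) (Set.Icc 0 T) s) ∧
      (∃ ε M : ℝ, 0 < ε ∧
        ∀ s ∈ Set.Icc 0 T, ε ≤ (H s).1 ∧ (H s).1 ≤ M ∧ ε ≤ (H s).2 ∧ (H s).2 ≤ M) := by
  classical
  have hq0 : (1:ℝ) / (α - 1) < 0 := div_neg_of_pos_of_neg one_pos (by linarith)
  have h1q : α / (α - 1) = 1 / (α - 1) + 1 := by field_simp; ring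
  have hsplitP : ∀ P : ℝ, 0 < P → P ^ (α / (α - 1)) = P ^ ((1:ℝ) / (α - 1)) * P := by
    intro P hP
    rw [h1q, Real.rpow_add hP, Real.rpow_one]
  have hexp_le1 : α / (α - 1) ≤ 1 := by linarith
  set c₀ : ℝ := max |α * A - ρ₁| |α * A - ρ₂| with hc₀def
  clear_value c₀
  have hc₀ : 0 ≤ c₀ := by rw [hc₀def]; exact le_trans (abs_nonneg _) (le_max_left _ _)
  set a₁ : ℝ := Real.exp (-(c₀ * T)) / 4 with ha₁def
  clear_value a₁
  have ha₁ : 0 < a₁ := by rw [ha₁def]; exact div_pos (Real.exp_pos _) (by norm_num)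
  have ha₁le : a₁ ≤ 1 / 4 := by
    rw [ha₁def]
    have : Real.exp (-(c₀ * T)) ≤ 1 :=
      Real.exp_le_one_iff.2 (neg_nonpos.2 (mul_nonneg hc₀ hT.le))
    linarith
  set c₂ : ℝ := c₀ + |α| * a₁ ^ ((1:ℝ) / (α - 1)) + a₁ ^ (α / (α - 1)) + 2 with hc₂def
  clear_value c₂
  have hpq1 : 0 ≤ |α| * a₁ ^ ((1:ℝ) / (α - 1)) :=
    mul_nonneg (abs_nonneg _) (Real.rpow_pos_of_pos ha₁ _).le
  have hpq2 : 0 ≤ a₁ ^ (α / (α - 1)) := (Real.rpow_pos_of_pos ha₁ _).le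
  have hc₂2 : 2 ≤ c₂ := by rw [hc₂def]; linarith
  have hc₂0 : 0 < c₂ := by linarith
  set b₁ : ℝ := 2 * Real.exp (c₂ * T) + 1 with hb₁def
  clear_value b₁
  have hb₁3 : 3 ≤ b₁ := by
    rw [hb₁def]
    have : 1 ≤ Real.exp (c₂ * T) := Real.one_le_exp_iff.2 (mul_nonneg hc₂0.le hT.le)
    linarith
  have ha₁b₁ : a₁ ≤ b₁ := by linarith
  -- barriers
  set Bl : ℝ → ℝ := fun s => Real.exp (-(c₀ * s)) / 2 with hBldef
  set Bu : ℝ → ℝ := fun s => 2 * Real.exp (c₂ * s) with hBudef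
  clear_value Bl Bu
  have hBlpos : ∀ s, 0 < Bl s := fun s => by
    rw [hBldef]; exact div_pos (Real.exp_pos _) (by norm_num)
  have hBupos : ∀ s, 0 < Bu s := fun s => by
    rw [hBudef]; exact mul_pos (by norm_num) (Real.exp_pos _)
  have hBl_le_half : ∀ s, 0 ≤ s → Bl s ≤ 1 / 2 := by
    intro s hs
    simp only [hBldef]
    have : Real.exp (-(c₀ * s)) ≤ 1 :=
      Real.exp_le_one_iff.2 (neg_nonpos.2 (mul_nonneg hc₀ hs))
    linarith
  have hBl_gt_a₁ : ∀ s, s ≤ T → a₁ < Bl s := by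
    intro s hs
    simp only [hBldef, ha₁def]
    have h1 : Real.exp (-(c₀ * T)) ≤ Real.exp (-(c₀ * s)) :=
      Real.exp_le_exp.2 (neg_le_neg (mul_le_mul_of_nonneg_left hs hc₀))
    have h2 : 0 < Real.exp (-(c₀ * T)) := Real.exp_pos _
    linarith
  have hBu_ge2 : ∀ s, 0 ≤ s → 2 ≤ Bu s := by
    intro s hs
    simp only [hBudef]
    have : 1 ≤ Real.exp (c₂ * s) := Real.one_le_exp_iff.2 (mul_nonneg hc₂0.le hs)
    linarith
  have hBu_lt_b₁ : ∀ s, s ≤ T → Bu s < b₁ := by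
    intro s hs
    simp only [hBudef, hb₁def]
    have h1 : Real.exp (c₂ * s) ≤ Real.exp (c₂ * T) :=
      Real.exp_le_exp.2 (mul_le_mul_of_nonneg_left hs hc₂0.le)
    linarith
  have hBlBu : ∀ s, 0 ≤ s → Bl s ≤ Bu s := by
    intro s hs
    have := hBl_le_half s hs
    have := hBu_ge2 s hs
    linarith
  have hBlderiv : ∀ s, HasDerivAt Bl (-c₀ * Bl s) s := by
    intro s
    have h1 : HasDerivAt (fun u : ℝ => -(c₀ * u)) (-c₀) s := by
      exact ((hasDerivAt_id s).const_mul c₀).neg.congr_deriv (by ring)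
    have h2 := (Real.hasDerivAt_exp (-(c₀ * s))).comp s h1
    have h3 := h2.div_const 2
    rw [hBldef]
    refine h3.congr_deriv ?_
    ring
  have hBuderiv : ∀ s, HasDerivAt Bu (c₂ * Bu s) s := by
    intro s
    have h1 : HasDerivAt (fun u : ℝ => c₂ * u) c₂ s := by
      simpa using (hasDerivAt_id s).const_mul c₂
    have h2 := (Real.hasDerivAt_exp (c₂ * s)).comp s h1
    have h3 := h2.const_mul 2
    rw [hBudef]
    refine h3.congr_deriv ?_
    ring
  -- the vector field and its clamped version
  set vF : ℝ × ℝ → ℝ × ℝ := vf A ρ₁ ρ₂ α lam m with hvF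
  set Gc : ℝ × ℝ → ℝ × ℝ := fun x => vF (clampB a₁ b₁ x) with hGcdef
  clear_value Gc
  have hvFsmooth : ∀ x : ℝ × ℝ, 0 < x.1 → 0 < x.2 → ContDiffAt ℝ 1 vF x :=
    fun x h1 h2 => vf_contDiffAt A ρ₁ ρ₂ α lam m hl0 hl1 h1 h2
  obtain ⟨K, hK⟩ := exists_lipschitzOnWith_box hvFsmooth ha₁ (b := b₁)
  have hGcLip : LipschitzWith K Gc := by
    have hmaps : Set.MapsTo (clampB a₁ b₁) Set.univ (Set.Icc (a₁, a₁) (b₁, b₁)) :=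
      fun x _ => clampB_mem ha₁b₁ x
    have hcomp := hK.comp ((clampB_lip a₁ b₁).lipschitzOnWith (s := Set.univ)) hmaps
    rw [lipschitzOnWith_univ] at hcomp
    rw [hGcdef]
    rw [mul_one] at hcomp; exact hcomp
  have hvFcont : ContinuousOn vF (Set.Icc (a₁, a₁) (b₁, b₁)) := fun x hx =>
    ((hvFsmooth x (lt_of_lt_of_le ha₁ hx.1.1) (lt_of_lt_of_le ha₁ hx.1.2)).continuousAt).continuousWithinAt
  obtain ⟨Cb, hCb⟩ := isCompact_Icc.exists_bound_of_continuousOn hvFcont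
  have hpl : IsPicardLindelof (fun _ x => Gc x) (tmin := 0) (tmax := T) ⟨0, ⟨le_refl 0, hT.le⟩⟩
      ((1:ℝ), (1:ℝ)) ⟨max Cb 0 * T, mul_nonneg (le_max_right _ _) hT.le⟩ 0
      ⟨max Cb 0, le_max_right _ _⟩ K :=
    { lipschitzOnWith := fun t _ => hGcLip.lipschitzOnWith
      continuousOn := fun x _ => continuousOn_const
      norm_le := fun t _ x _ => by
        rw [hGcdef]
        exact le_trans (hCb _ (clampB_mem ha₁b₁ x)) (le_max_left _ _)
      mul_max_le := by
        show max Cb 0 * max (T - 0) (0 - 0) ≤ max Cb 0 * T - ((0:NNReal):ℝ)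
        rw [NNReal.coe_zero]; simp only [sub_zero, sub_self]; rw [max_eq_left hT.le] }
  obtain ⟨H, hH0, hHderiv⟩ := hpl.exists_eq_forall_mem_Icc_hasDerivWithinAt₀
  replace hH0 : H 0 = ((1:ℝ), (1:ℝ)) := hH0
  set d : ℝ → ℝ × ℝ := fun s => Gc (H s) with hddef
  have hHcont : ContinuousOn H (Set.Icc 0 T) := fun s hs => (hHderiv s hs).continuousWithinAt
  have hH1cont : ContinuousOn (fun s => (H s).1) (Set.Icc 0 T) :=
    continuous_fst.comp_continuousOn hHcont
  have hH2cont : ContinuousOn (fun s => (H s).2) (Set.Icc 0 T) :=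
    continuous_snd.comp_continuousOn hHcont
  have hd1 : ∀ s ∈ Set.Ico 0 T, HasDerivWithinAt (fun s => (H s).1) ((d s).1) (Set.Ici s) s := by
    intro s hs
    have h := hasDerivWithinAt_Ici_of_Icc hs (hHderiv s (Set.Ico_subset_Icc_self hs))
    exact (ContinuousLinearMap.fst ℝ ℝ ℝ).hasFDerivAt.comp_hasDerivWithinAt s h
  have hd2 : ∀ s ∈ Set.Ico 0 T, HasDerivWithinAt (fun s => (H s).2) ((d s).2) (Set.Ici s) s := by
    intro s hs
    have h := hasDerivWithinAt_Ici_of_Icc hs (hHderiv s (Set.Ico_subset_Icc_self hs))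
    exact (ContinuousLinearMap.snd ℝ ℝ ℝ).hasFDerivAt.comp_hasDerivWithinAt s h
  -- key pointwise estimates
  have hkey_low : ∀ ρi : ℝ, |α * A - ρi| ≤ c₀ → ∀ x : ℝ, ∀ u P : ℝ,
      u = Bl x → Bl x ≤ P →
      -c₀ * Bl x < (α * A - ρi - α * P ^ ((1:ℝ) / (α - 1))) * u + P ^ (α / (α - 1)) := by
    intro ρi hρi x u P hu hP
    have hBx := hBlpos x
    have hPpos : 0 < P := lt_of_lt_of_le hBx hP
    rw [hsplitP P hPpos, hu]
    have h1 : -c₀ * Bl x ≤ (α * A - ρi) * Bl x :=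
      mul_le_mul_of_nonneg_right (neg_le_of_abs_le hρi) hBx.le
    have h2 : 0 < P ^ ((1:ℝ) / (α - 1)) * (P - α * Bl x) := by
      apply mul_pos (Real.rpow_pos_of_pos hPpos _)
      have h3 : α * Bl x < 1 * Bl x := mul_lt_mul_of_pos_right hαlt hBx
      linarith
    have expand : (α * A - ρi - α * P ^ ((1:ℝ) / (α - 1))) * Bl x + P ^ ((1:ℝ) / (α - 1)) * P
        = (α * A - ρi) * Bl x + P ^ ((1:ℝ) / (α - 1)) * (P - α * Bl x) := by ring
    rw [expand]
    linarith [h1, h2]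
  have hkey_up : ∀ ρi : ℝ, |α * A - ρi| ≤ c₀ → ∀ x : ℝ, 0 ≤ x → x ≤ T → ∀ u P : ℝ,
      u = Bu x → Bl x ≤ P → P ≤ Bu x →
      (α * A - ρi - α * P ^ ((1:ℝ) / (α - 1))) * u + P ^ (α / (α - 1)) < c₂ * Bu x := by
    intro ρi hρi x hx0 hxT u P hPl' hPl hPu
    have hPpos : 0 < P := lt_of_lt_of_le (hBlpos x) hPl
    have ha₁P : a₁ ≤ P := le_of_lt (lt_of_lt_of_le (hBl_gt_a₁ x hxT) hPl)
    have hBu2 := hBu_ge2 x hx0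
    have hBupos' := hBupos x
    have e0 : P ^ ((1:ℝ) / (α - 1)) ≤ a₁ ^ ((1:ℝ) / (α - 1)) :=
      Real.rpow_le_rpow_of_nonpos ha₁ ha₁P hq0.le
    have e1 : (α * A - ρi) * u ≤ c₀ * Bu x := by
      rw [hPl']
      exact mul_le_mul_of_nonneg_right (le_trans (le_abs_self _) hρi) hBupos'.le
    have e2 : -(α * P ^ ((1:ℝ) / (α - 1))) * u ≤ |α| * a₁ ^ ((1:ℝ) / (α - 1)) * Bu x := by
      rw [hPl']
      apply mul_le_mul_of_nonneg_right _ hBupos'.le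
      have hPe : 0 < P ^ ((1:ℝ) / (α - 1)) := Real.rpow_pos_of_pos hPpos _
      calc -(α * P ^ ((1:ℝ) / (α - 1))) = -α * P ^ ((1:ℝ) / (α - 1)) := by ring
        _ ≤ |α| * P ^ ((1:ℝ) / (α - 1)) := mul_le_mul_of_nonneg_right (neg_le_abs α) hPe.le
        _ ≤ |α| * a₁ ^ ((1:ℝ) / (α - 1)) := mul_le_mul_of_nonneg_left e0 (abs_nonneg α)
    have e3 : P ^ (α / (α - 1)) ≤ (a₁ ^ (α / (α - 1)) + 1) * Bu x := by
      have h4 : 0 < a₁ ^ (α / (α - 1)) := Real.rpow_pos_of_pos ha₁ _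
      rcases le_or_gt (α / (α - 1)) 0 with hle | hlt
      · have h1 : P ^ (α / (α - 1)) ≤ a₁ ^ (α / (α - 1)) :=
          Real.rpow_le_rpow_of_nonpos ha₁ ha₁P hle
        calc P ^ (α / (α - 1)) ≤ a₁ ^ (α / (α - 1)) := h1
          _ = a₁ ^ (α / (α - 1)) * 1 := (mul_one _).symm
          _ ≤ a₁ ^ (α / (α - 1)) * Bu x :=
            mul_le_mul_of_nonneg_left (by linarith) h4.le
          _ ≤ (a₁ ^ (α / (α - 1)) + 1) * Bu x :=
            mul_le_mul_of_nonneg_right (by linarith) hBupos'.le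
      · have h1 : P ^ (α / (α - 1)) ≤ (Bu x) ^ (α / (α - 1)) :=
          Real.rpow_le_rpow hPpos.le hPu hlt.le
        have h2 : (Bu x) ^ (α / (α - 1)) ≤ (Bu x) ^ (1:ℝ) :=
          Real.rpow_le_rpow_of_exponent_le (by linarith) hexp_le1
        rw [Real.rpow_one] at h2
        calc P ^ (α / (α - 1)) ≤ Bu x := h1.trans h2
          _ = 1 * Bu x := (one_mul _).symm
          _ ≤ (a₁ ^ (α / (α - 1)) + 1) * Bu x :=
            mul_le_mul_of_nonneg_right (by linarith) hBupos'.le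
    have expand : (α * A - ρi - α * P ^ ((1:ℝ) / (α - 1))) * u + P ^ (α / (α - 1))
        = (α * A - ρi) * u + -(α * P ^ ((1:ℝ) / (α - 1))) * u + P ^ (α / (α - 1)) := by ring
    rw [expand]
    have hsum := add_le_add (add_le_add e1 e2) e3
    have h5 : c₀ * Bu x + |α| * a₁ ^ ((1:ℝ) / (α - 1)) * Bu x + (a₁ ^ (α / (α - 1)) + 1) * Bu x
        = (c₂ - 1) * Bu x := by rw [hc₂def]; ring
    rw [h5] at hsum
    exact lt_of_le_of_lt hsum
      (mul_lt_mul_of_pos_right (by linarith) hBupos')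
  -- lower barrier: both components stay above `Bl`
  have hρ₁c : |α * A - ρ₁| ≤ c₀ := by rw [hc₀def]; exact le_max_left _ _
  have hρ₂c : |α * A - ρ₂| ≤ c₀ := by rw [hc₀def]; exact le_max_right _ _
  have hlow : ∀ s ∈ Set.Icc 0 T, Bl s ≤ (H s).1 ∧ Bl s ≤ (H s).2 := by
    have hBl0 : Bl 0 = 1 / 2 := by rw [hBldef]; simp
    have hdlow : ∀ x ∈ Set.Ico 0 T, ∀ i : Bool,
        (if i then (H x).1 else (H x).2) = Bl x →
        Bl x ≤ (if i then (H x).2 else (H x).1) →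
        -c₀ * Bl x < (if i then (d x).1 else (d x).2) := by
      intro x hx i htouch hother
      have hx0 : (0:ℝ) ≤ x := hx.1
      have hxT : x ≤ T := hx.2.le
      have hBlx_a₁ : a₁ ≤ Bl x := (hBl_gt_a₁ x hxT).le
      have hBlx_b₁ : Bl x ≤ b₁ := le_trans (hBl_le_half x hx0) (by linarith)
      set z := clampB a₁ b₁ (H x) with hz
      have hz1 : z.1 = cl a₁ b₁ (H x).1 := rfl
      have hz2 : z.2 = cl a₁ b₁ (H x).2 := rfl
      have hclkey : ∀ w : ℝ, Bl x ≤ w → Bl x ≤ cl a₁ b₁ w := by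
        intro w hw
        calc Bl x = min b₁ (Bl x) := (min_eq_right hBlx_b₁).symm
          _ ≤ min b₁ w := min_le_min (le_refl _) hw
          _ ≤ cl a₁ b₁ w := min_le_cl
      have hz1pos : 0 < z.1 := lt_of_lt_of_le ha₁ (le_cl _ _ _)
      have hz2pos : 0 < z.2 := lt_of_lt_of_le ha₁ (le_cl _ _ _)
      have hdx : d x = vF z := by simp only [hddef, hGcdef, hz]
      cases i
      · -- i = false : touching component is the second
        simp only [if_neg Bool.false_ne_true] at htouch hother ⊢
        have hz2' : z.2 = Bl x := by rw [hz2, htouch]; exact cl_eq hBlx_a₁ hBlx_b₁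
        have hz1' : Bl x ≤ z.1 := hclkey _ hother
        have hP : Bl x ≤ pfun lam m z := le_pfun hl0 hl1 hz1pos hz2pos hz1' (le_of_eq hz2'.symm)
        have hval : (d x).2 = (α * A - ρ₂ - α * pfun lam m z ^ ((1:ℝ) / (α - 1))) * z.2
            + pfun lam m z ^ (α / (α - 1)) := by
          rw [hdx, hvF]; rfl
        rw [hval]
        exact hkey_low ρ₂ hρ₂c x z.2 (pfun lam m z) hz2' hP
      · -- i = true : touching component is the first
        simp only [if_pos] at htouch hother ⊢
        have hz1' : z.1 = Bl x := by rw [hz1, htouch]; exact cl_eq hBlx_a₁ hBlx_b₁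
        have hz2' : Bl x ≤ z.2 := hclkey _ hother
        have hP : Bl x ≤ pfun lam m z := le_pfun hl0 hl1 hz1pos hz2pos (le_of_eq hz1'.symm) hz2'
        have hval : (d x).1 = (α * A - ρ₁ - α * pfun lam m z ^ ((1:ℝ) / (α - 1))) * z.1
            + pfun lam m z ^ (α / (α - 1)) := by
          rw [hdx, hvF]; rfl
        rw [hval]
        exact hkey_low ρ₁ hρ₁c x z.1 (pfun lam m z) hz1' hP
    have hres := barrier_max (a := 0) (b := T)
      (H₁ := fun s => -(H s).1) (H₂ := fun s => -(H s).2)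
      (d₁ := fun s => -(d s).1) (d₂ := fun s => -(d s).2)
      (B := fun s => -Bl s) (B' := fun s => c₀ * Bl s)
      hH1cont.neg hH2cont.neg
      (fun x hx => (hd1 x hx).neg) (fun x hx => (hd2 x hx).neg)
      (fun x => (hBlderiv x).neg.congr_deriv (by ring))
      (by show -(H 0).1 ≤ -Bl 0; rw [hH0, hBl0]; norm_num)
      (by show -(H 0).2 ≤ -Bl 0; rw [hH0, hBl0]; norm_num)
      (fun x hx h1 h2 => by
        have h1' : -(H x).1 = -Bl x := h1
        have h2' : -(H x).2 ≤ -Bl x := h2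
        have := hdlow x hx true (by simpa using h1') (by simp; linarith)
        simp only [if_pos] at this
        show -(d x).1 < c₀ * Bl x
        linarith)
      (fun x hx h1 h2 => by
        have h1' : -(H x).2 = -Bl x := h1
        have h2' : -(H x).1 ≤ -Bl x := h2
        have := hdlow x hx false (by simpa using h1') (by simp; linarith)
        simp only [if_neg Bool.false_ne_true] at this
        show -(d x).2 < c₀ * Bl x
        linarith)
    intro s hs
    obtain ⟨h1, h2⟩ := hres s hs
    have h1' : -(H s).1 ≤ -Bl s := h1
    have h2' : -(H s).2 ≤ -Bl s := h2
    exact ⟨by linarith, by linarith⟩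
  -- upper barrier
  have hup : ∀ s ∈ Set.Icc 0 T, (H s).1 ≤ Bu s ∧ (H s).2 ≤ Bu s := by
    have hBu0 : Bu 0 = 2 := by rw [hBudef]; simp
    have hdup : ∀ x ∈ Set.Ico 0 T, ∀ i : Bool,
        (if i then (H x).1 else (H x).2) = Bu x →
        (if i then (H x).2 else (H x).1) ≤ Bu x →
        (if i then (d x).1 else (d x).2) < c₂ * Bu x := by
      intro x hx i htouch hother
      have hx0 : (0:ℝ) ≤ x := hx.1
      have hxT : x ≤ T := hx.2.le
      obtain ⟨hlow1, hlow2⟩ := hlow x (Set.Ico_subset_Icc_self hx)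
      have hBlx_a₁ : a₁ ≤ Bl x := (hBl_gt_a₁ x hxT).le
      have hBu_b₁ : Bu x ≤ b₁ := (hBu_lt_b₁ x hxT).le
      have hH1a : a₁ ≤ (H x).1 := le_trans hBlx_a₁ hlow1
      have hH2a : a₁ ≤ (H x).2 := le_trans hBlx_a₁ hlow2
      have hH1b : (H x).1 ≤ b₁ := by
        cases i
        · simp only [if_neg Bool.false_ne_true] at htouch hother; linarith
        · simp only [if_pos] at htouch hother; linarith
      have hH2b : (H x).2 ≤ b₁ := by
        cases i
        · simp only [if_neg Bool.false_ne_true] at htouch hother; linarith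
        · simp only [if_pos] at htouch hother; linarith
      have hRid : clampB a₁ b₁ (H x) = H x := clampB_eq hH1a hH1b hH2a hH2b
      have hdx : d x = vF (H x) := by simp only [hddef, hGcdef, hRid]
      have hH1pos : 0 < (H x).1 := lt_of_lt_of_le ha₁ hH1a
      have hH2pos : 0 < (H x).2 := lt_of_lt_of_le ha₁ hH2a
      cases i
      · simp only [if_neg Bool.false_ne_true] at htouch hother ⊢
        have hP1 : Bl x ≤ pfun lam m (H x) := le_pfun hl0 hl1 hH1pos hH2pos hlow1 hlow2
        have hP2 : pfun lam m (H x) ≤ Bu x := by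
          apply pfun_le_max hl0 hl1 hH1pos hH2pos hother (le_of_eq htouch)
        have hval : (d x).2 = (α * A - ρ₂ - α * pfun lam m (H x) ^ ((1:ℝ) / (α - 1))) * (H x).2
            + pfun lam m (H x) ^ (α / (α - 1)) := by
          rw [hdx, hvF]; rfl
        rw [hval]
        exact hkey_up ρ₂ hρ₂c x hx0 hxT (H x).2 (pfun lam m (H x)) htouch hP1 hP2
      · simp only [if_pos] at htouch hother ⊢
        have hP1 : Bl x ≤ pfun lam m (H x) := le_pfun hl0 hl1 hH1pos hH2pos hlow1 hlow2
        have hP2 : pfun lam m (H x) ≤ Bu x := by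
          apply pfun_le_max hl0 hl1 hH1pos hH2pos (le_of_eq htouch) hother
        have hval : (d x).1 = (α * A - ρ₁ - α * pfun lam m (H x) ^ ((1:ℝ) / (α - 1))) * (H x).1
            + pfun lam m (H x) ^ (α / (α - 1)) := by
          rw [hdx, hvF]; rfl
        rw [hval]
        exact hkey_up ρ₁ hρ₁c x hx0 hxT (H x).1 (pfun lam m (H x)) htouch hP1 hP2
    have hres := barrier_max (a := 0) (b := T)
      (H₁ := fun s => (H s).1) (H₂ := fun s => (H s).2)
      (d₁ := fun s => (d s).1) (d₂ := fun s => (d s).2)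
      (B := Bu) (B' := fun s => c₂ * Bu s)
      hH1cont hH2cont hd1 hd2 hBuderiv
      (by show (H 0).1 ≤ Bu 0; rw [hH0, hBu0]; norm_num)
      (by show (H 0).2 ≤ Bu 0; rw [hH0, hBu0]; norm_num)
      (fun x hx h1 h2 => by
        have h1' : (H x).1 = Bu x := h1
        have h2' : (H x).2 ≤ Bu x := h2
        have := hdup x hx true h1' h2'
        simp only [if_pos] at this
        exact this)
      (fun x hx h1 h2 => by
        have h1' : (H x).2 = Bu x := h1
        have h2' : (H x).1 ≤ Bu x := h2
        have := hdup x hx false h1' h2'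
        simp only [if_neg Bool.false_ne_true] at this
        exact this)
    exact hres
  -- conclusion
  refine ⟨H, hH0, ?_, ⟨a₁, b₁, ha₁, ?_⟩⟩
  · intro s hs
    obtain ⟨hl1', hl2'⟩ := hlow s hs
    obtain ⟨hu1', hu2'⟩ := hup s hs
    have hBlx_a₁ : a₁ ≤ Bl s := (hBl_gt_a₁ s hs.2).le
    have hBu_b₁ : Bu s ≤ b₁ := (hBu_lt_b₁ s hs.2).le
    have hRid : clampB a₁ b₁ (H s) = H s :=
      clampB_eq (le_trans hBlx_a₁ hl1') (le_trans hu1' hBu_b₁)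
        (le_trans hBlx_a₁ hl2') (le_trans hu2' hBu_b₁)
    have := hHderiv s hs
    simp only [hGcdef, hRid] at this
    exact this
  · intro s hs
    obtain ⟨hl1', hl2'⟩ := hlow s hs
    obtain ⟨hu1', hu2'⟩ := hup s hs
    have hBlx_a₁ : a₁ ≤ Bl s := (hBl_gt_a₁ s hs.2).le
    have hBu_b₁ : Bu s ≤ b₁ := (hBu_lt_b₁ s hs.2).le
    exact ⟨le_trans hBlx_a₁ hl1', le_trans hu1' hBu_b₁,
      le_trans hBlx_a₁ hl2', le_trans hu2' hBu_b₁⟩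

end EZaux

namespace EZaux

open Set

/-- Uniqueness for the reversed `h`-system via Grönwall. -/
lemma uniqueH (A ρ₁ ρ₂ α lam m T : ℝ) (hl0 : 0 < lam) (hl1 : lam < 1)
    {f g : ℝ → ℝ × ℝ} {εf Mf εg Mg : ℝ} (hεf : 0 < εf) (hεg : 0 < εg)
    (hfc : ContinuousOn f (Set.Icc 0 T)) (hgc : ContinuousOn g (Set.Icc 0 T))
    (hfd : ∀ s ∈ Set.Ico 0 T, HasDerivWithinAt f (vf A ρ₁ ρ₂ α lam m (f s)) (Set.Ici s) s)
    (hgd : ∀ s ∈ Set.Ico 0 T, HasDerivWithinAt g (vf A ρ₁ ρ₂ α lam m (g s)) (Set.Ici s) s)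
    (hfm : ∀ s ∈ Set.Icc 0 T, f s ∈ Set.Icc (εf, εf) (Mf, Mf))
    (hgm : ∀ s ∈ Set.Icc 0 T, g s ∈ Set.Icc (εg, εg) (Mg, Mg))
    (h0 : f 0 = g 0) : Set.EqOn f g (Set.Icc 0 T) := by
  have hε : 0 < min εf εg := lt_min hεf hεg
  obtain ⟨K, hK⟩ := exists_lipschitzOnWith_box (F := vf A ρ₁ ρ₂ α lam m)
    (fun x h1 h2 => vf_contDiffAt A ρ₁ ρ₂ α lam m hl0 hl1 h1 h2) hε (b := max Mf Mg)
  have hsub1 : Set.Icc ((εf:ℝ), (εf:ℝ)) (Mf, Mf) ⊆ Set.Icc (min εf εg, min εf εg) (max Mf Mg, max Mf Mg) :=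
    Set.Icc_subset_Icc ⟨min_le_left _ _, min_le_left _ _⟩ ⟨le_max_left _ _, le_max_left _ _⟩
  have hsub2 : Set.Icc ((εg:ℝ), (εg:ℝ)) (Mg, Mg) ⊆ Set.Icc (min εf εg, min εf εg) (max Mf Mg, max Mf Mg) :=
    Set.Icc_subset_Icc ⟨min_le_right _ _, min_le_right _ _⟩ ⟨le_max_right _ _, le_max_right _ _⟩
  exact ODE_solution_unique_of_mem_Icc_right (v := fun _ x => vf A ρ₁ ρ₂ α lam m x)
    (s := fun _ => Set.Icc (min εf εg, min εf εg) (max Mf Mg, max Mf Mg)) (K := K)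
    (fun _ _ => hK) hfc hfd
    (fun s hs => hsub1 (hfm s (Set.Ico_subset_Icc_self hs))) hgc hgd
    (fun s hs => hsub2 (hgm s (Set.Ico_subset_Icc_self hs))) h0

/-- time reversal of a derivative on `[0,T]`. -/
lemma comp_rev_deriv {T : ℝ} {F : ℝ → ℝ} {e t : ℝ} (ht : t ∈ Set.Icc 0 T)
    (hd : HasDerivWithinAt F e (Set.Icc 0 T) (T - t)) :
    HasDerivWithinAt (fun u => F (T - u)) (-e) (Set.Icc 0 T) t := by
  have hι : HasDerivWithinAt (fun u : ℝ => T - u) (-1) (Set.Icc 0 T) t :=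
    ((hasDerivAt_id t).const_sub T).hasDerivWithinAt
  have hmaps : Set.MapsTo (fun u : ℝ => T - u) (Set.Icc 0 T) (Set.Icc 0 T) := by
    intro u hu
    exact ⟨by show (0:ℝ) ≤ T - u; linarith [hu.2], by show T - u ≤ T; linarith [hu.1]⟩
  have h := hd.comp t hι hmaps
  exact h.congr_deriv (by ring)

/-- chain rule for a real power of a positive function. -/
lemma rpow_deriv_chain {s : Set ℝ} {F : ℝ → ℝ} {e p t : ℝ} (hpos : 0 < F t)
    (hd : HasDerivWithinAt F e s t) :
    HasDerivWithinAt (fun u => F u ^ p) (p * F t ^ (p - 1) * e) s t := by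
  have h := Real.hasDerivAt_rpow_const (x := F t) (p := p) (Or.inl hpos.ne')
  exact h.comp_hasDerivWithinAt t hd

/-- first/second coordinate of vf. -/
lemma vf_fst (A ρ₁ ρ₂ α lam m : ℝ) (x : ℝ × ℝ) :
    (vf A ρ₁ ρ₂ α lam m x).1
      = (α * A - ρ₁ - α * pfun lam m x ^ ((1:ℝ)/(α-1))) * x.1 + pfun lam m x ^ (α/(α-1)) := rfl

lemma vf_snd (A ρ₁ ρ₂ α lam m : ℝ) (x : ℝ × ℝ) :
    (vf A ρ₁ ρ₂ α lam m x).2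
      = (α * A - ρ₂ - α * pfun lam m x ^ ((1:ℝ)/(α-1))) * x.2 + pfun lam m x ^ (α/(α-1)) := rfl

end EZaux

namespace EZaux

/-- The key algebraic identity for the second component. -/
lemma ez_algebra₂ (γ α lam A ρ x₁ x₂ d : ℝ)
    (hα0 : α ≠ 0) (hα1 : α - 1 ≠ 0) (hγ1 : (1:ℝ) - γ ≠ 0)
    (h1 : 0 < x₁) (h2 : 0 < x₂) (hl0 : 0 < lam) (hl1 : lam < 1) :
    ((1-γ)/α) * x₂ ^ ((1-γ)/α - 1) * d
      + (1-γ) * (x₂ ^ ((1-γ)/α)) *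
        (A - ((lam * x₁ ^ ((1-γ)/α) + (1-lam) * x₂ ^ ((1-γ)/α)) ^ ((1:ℝ)/(α-1)) *
          (lam * (x₁ ^ ((1-γ)/α)) ^ ((1-γ-α)/(1-γ)) +
            (1-lam) * (x₂ ^ ((1-γ)/α)) ^ ((1-γ-α)/(1-γ))) ^ (-((1:ℝ)/(α-1)))))
      - (1-γ) * ρ * α⁻¹ * x₂ ^ ((1-γ)/α)
      + α⁻¹ * (1-γ) * (x₂ ^ ((1-γ)/α)) ^ ((1-γ-α)/(1-γ)) *
          (lam * x₁ ^ ((1-γ)/α) + (1-lam) * x₂ ^ ((1-γ)/α)) ^ (α/(α-1)) *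
          (lam * (x₁ ^ ((1-γ)/α)) ^ ((1-γ-α)/(1-γ)) +
            (1-lam) * (x₂ ^ ((1-γ)/α)) ^ ((1-γ-α)/(1-γ))) ^ (-(α/(α-1)))
    = ((1-γ)/α) * x₂ ^ ((1-γ)/α - 1) *
        (d - (α * pfun lam ((1-γ)/α) (x₁, x₂) ^ ((1:ℝ)/(α-1)) - α * A + ρ) * x₂
          + pfun lam ((1-γ)/α) (x₁, x₂) ^ (α/(α-1))) := by
  have h := ez_algebra γ α (1 - lam) A ρ x₂ x₁ d hα0 hα1 hγ1 h2 h1 (by linarith) (by linarith)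
  rw [sub_sub_cancel] at h
  rw [show (1 - lam) * x₂ ^ ((1-γ)/α) + lam * x₁ ^ ((1-γ)/α)
      = lam * x₁ ^ ((1-γ)/α) + (1-lam) * x₂ ^ ((1-γ)/α) from add_comm _ _] at h
  rw [show (1 - lam) * (x₂ ^ ((1-γ)/α)) ^ ((1-γ-α)/(1-γ)) + lam * (x₁ ^ ((1-γ)/α)) ^ ((1-γ-α)/(1-γ))
      = lam * (x₁ ^ ((1-γ)/α)) ^ ((1-γ-α)/(1-γ)) + (1-lam) * (x₂ ^ ((1-γ)/α)) ^ ((1-γ-α)/(1-γ))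
      from add_comm _ _] at h
  rw [← pfun_swap lam ((1-γ)/α) x₁ x₂] at h
  exact h

/-- collapsing a power chain. -/
lemma collapse (k mv φv : ℝ) (hφ : 0 < φv) (hkmv : k * mv = 1) :
    k * φv ^ (k - 1) * (mv * (φv ^ k) ^ (mv - 1)) = 1 := by
  have h1 : (φv ^ k) ^ (mv - 1) = φv ^ (k * (mv - 1)) := (Real.rpow_mul hφ.le _ _).symm
  rw [h1]
  have he : (k - 1) + (k * (mv - 1)) = 0 := by nlinarith [hkmv]
  have h2 : φv ^ (k - 1) * φv ^ (k * (mv - 1)) = 1 := by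
    rw [← Real.rpow_add hφ, he, Real.rpow_zero]
  calc k * φv ^ (k-1) * (mv * φv ^ (k*(mv-1)))
      = (k * mv) * (φv ^ (k-1) * φv ^ (k*(mv-1))) := by ring
    _ = 1 := by rw [hkmv, h2, mul_one]

end EZaux


/-- Proposition of Section 5.2 (well-posedness): the Epstein–Zin equilibrium ODE
system (M-HJB) on `[0, T]` admits a unique positive solution `(θ₁, θ₂)`
(uniqueness up to equality on `[0, T]`). -/
theorem statement11 (r μ σ ρ₁ ρ₂ γ α lam T : ℝ) (hT : 0 < T)
    (hσ : σ ≠ 0) (hγ : 0 < γ) (hγ1 : γ ≠ 1) (hα0 : α ≠ 0) (hα1 : α ≠ 1)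
    (hαγ : 0 < α / (1 - γ)) (hsgn : 0 ≤ (1 / α - 1) * (1 - γ))
    (hl0 : 0 < lam) (hl1 : lam < 1) (hρ : ρ₂ ≤ ρ₁) :
    ∃ θ₁ θ₂ : ℝ → ℝ,
      IsMHJBSolution r μ σ ρ₁ ρ₂ γ α lam 0 T θ₁ θ₂ ∧
      ∀ φ₁ φ₂ : ℝ → ℝ, IsMHJBSolution r μ σ ρ₁ ρ₂ γ α lam 0 T φ₁ φ₂ →
        Set.EqOn φ₁ θ₁ (Set.Icc 0 T) ∧ Set.EqOn φ₂ θ₂ (Set.Icc 0 T) := by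
  classical
  have hγ1' : (1:ℝ) - γ ≠ 0 := fun h => hγ1 (by linarith)
  have hα1' : α - 1 ≠ 0 := fun h => hα1 (by linarith)
  have hsigns := div_pos_iff.1 hαγ
  have hαlt : α < 1 := by
    rcases hsigns with ⟨hsA, hsB⟩ | ⟨hsA, hsB⟩
    · rcases lt_or_gt_of_ne hα1 with h | h
      · exact h
      · exfalso
        have h1 : 1 / α - 1 < 0 := by
          rw [sub_neg, div_lt_one (by linarith)]
          linarith
        nlinarith
    · linarith
  set Av : ℝ := r + (μ - r) ^ 2 / (2 * γ * σ ^ 2) with hAv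
  clear_value Av
  set mv : ℝ := (1 - γ) / α with hmv
  have hm0 : 0 < mv := by
    rw [hmv]
    rcases hsigns with ⟨hsA, hsB⟩ | ⟨hsA, hsB⟩
    · exact div_pos hsB hsA
    · exact div_pos_of_neg_of_neg hsB hsA
  clear_value mv
  set kv : ℝ := α / (1 - γ) with hkv
  have hkmv : kv * mv = 1 := by rw [hkv, hmv]; field_simp
  have hk0 : 0 < kv := by rw [hkv]; exact hαγ
  clear_value kv
  obtain ⟨H, hH0, hHd, ε, M, hε, hbox⟩ :=
    EZaux.existH Av ρ₁ ρ₂ α lam mv T hT hm0 hα1' hαlt hl0 hl1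
  have hpos : ∀ s ∈ Set.Icc 0 T, 0 < (H s).1 ∧ 0 < (H s).2 := fun s hs =>
    ⟨lt_of_lt_of_le hε (hbox s hs).1, lt_of_lt_of_le hε (hbox s hs).2.2.1⟩
  have hHcont : ContinuousOn H (Set.Icc 0 T) := fun s hs => (hHd s hs).continuousWithinAt
  have hmapsT : ∀ t ∈ Set.Icc 0 T, T - t ∈ Set.Icc 0 T := fun t ht =>
    ⟨by linarith [ht.2], by linarith [ht.1]⟩
  have hmapsT' : Set.MapsTo (fun t : ℝ => T - t) (Set.Icc 0 T) (Set.Icc 0 T) := fun t ht =>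
    hmapsT t ht
  -- the candidate solution
  set θ₁ : ℝ → ℝ := fun t => (H (T - t)).1 ^ mv with hθ₁
  set θ₂ : ℝ → ℝ := fun t => (H (T - t)).2 ^ mv with hθ₂
  set θ₁' : ℝ → ℝ := fun t =>
    mv * (H (T - t)).1 ^ (mv - 1) * (-(EZaux.vf Av ρ₁ ρ₂ α lam mv (H (T - t))).1) with hθ₁'
  set θ₂' : ℝ → ℝ := fun t =>
    mv * (H (T - t)).2 ^ (mv - 1) * (-(EZaux.vf Av ρ₁ ρ₂ α lam mv (H (T - t))).2) with hθ₂'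
  -- derivatives
  have hDer1 : ∀ t ∈ Set.Icc 0 T, HasDerivWithinAt θ₁ (θ₁' t) (Set.Icc 0 T) t := by
    intro t ht
    have hu := hmapsT t ht
    have h1 : HasDerivWithinAt (fun s => (H s).1)
        ((EZaux.vf Av ρ₁ ρ₂ α lam mv (H (T - t))).1) (Set.Icc 0 T) (T - t) :=
      (ContinuousLinearMap.fst ℝ ℝ ℝ).hasFDerivAt.comp_hasDerivWithinAt _ (hHd _ hu)
    have h2 := EZaux.comp_rev_deriv ht h1
    exact EZaux.rpow_deriv_chain (F := fun u => (H (T - u)).1) (p := mv) (hpos _ hu).1 h2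
  have hDer2 : ∀ t ∈ Set.Icc 0 T, HasDerivWithinAt θ₂ (θ₂' t) (Set.Icc 0 T) t := by
    intro t ht
    have hu := hmapsT t ht
    have h1 : HasDerivWithinAt (fun s => (H s).2)
        ((EZaux.vf Av ρ₁ ρ₂ α lam mv (H (T - t))).2) (Set.Icc 0 T) (T - t) :=
      (ContinuousLinearMap.snd ℝ ℝ ℝ).hasFDerivAt.comp_hasDerivWithinAt _ (hHd _ hu)
    have h2 := EZaux.comp_rev_deriv ht h1
    exact EZaux.rpow_deriv_chain (F := fun u => (H (T - u)).2) (p := mv) (hpos _ hu).2 h2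
  -- continuity of the derivatives
  have hHrev : ContinuousOn (fun t => H (T - t)) (Set.Icc 0 T) :=
    hHcont.comp (continuous_const.sub continuous_id).continuousOn hmapsT'
  have hvrev : ContinuousOn (fun t => EZaux.vf Av ρ₁ ρ₂ α lam mv (H (T - t))) (Set.Icc 0 T) := by
    have hvFon : ContinuousOn (EZaux.vf Av ρ₁ ρ₂ α lam mv)
        {x : ℝ × ℝ | 0 < x.1 ∧ 0 < x.2} := fun x hx =>
      ((EZaux.vf_contDiffAt Av ρ₁ ρ₂ α lam mv hl0 hl1 hx.1 hx.2).continuousAt).continuousWithinAt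
    exact hvFon.comp hHrev (fun s hs => ⟨(hpos _ (hmapsT s hs)).1, (hpos _ (hmapsT s hs)).2⟩)
  have hC1 : ContinuousOn θ₁' (Set.Icc 0 T) := by
    rw [hθ₁']
    apply ContinuousOn.mul
    · apply ContinuousOn.mul continuousOn_const
      exact (continuous_fst.comp_continuousOn hHrev).rpow_const
        (fun t ht => Or.inl (ne_of_gt (hpos _ (hmapsT t ht)).1))
    · exact (continuous_fst.comp_continuousOn hvrev).neg
  have hC2 : ContinuousOn θ₂' (Set.Icc 0 T) := by
    rw [hθ₂']
    apply ContinuousOn.mul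
    · apply ContinuousOn.mul continuousOn_const
      exact (continuous_snd.comp_continuousOn hHrev).rpow_const
        (fun t ht => Or.inl (ne_of_gt (hpos _ (hmapsT t ht)).2))
    · exact (continuous_snd.comp_continuousOn hvrev).neg
  -- positivity and terminal values
  have hpos1 : ∀ t ∈ Set.Icc 0 T, 0 < θ₁ t := fun t ht =>
    Real.rpow_pos_of_pos (hpos _ (hmapsT t ht)).1 _
  have hpos2 : ∀ t ∈ Set.Icc 0 T, 0 < θ₂ t := fun t ht =>
    Real.rpow_pos_of_pos (hpos _ (hmapsT t ht)).2 _
  have hθ₁T : θ₁ T = 1 := by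
    rw [hθ₁]
    show (H (T - T)).1 ^ mv = 1
    rw [sub_self, hH0]
    exact Real.one_rpow mv
  have hθ₂T : θ₂ T = 1 := by
    rw [hθ₂]
    show (H (T - T)).2 ^ mv = 1
    rw [sub_self, hH0]
    exact Real.one_rpow mv
  -- the equations
  have hEq1 : ∀ t ∈ Set.Icc 0 T,
      θ₁' t + (1 - γ) * θ₁ t * (r + (μ - r) ^ 2 / (2 * γ * σ ^ 2) - mhjbC γ α lam θ₁ θ₂ t)
        - (1 - γ) * ρ₁ * α⁻¹ * θ₁ t
        + α⁻¹ * (1 - γ) * θ₁ t ^ ((1 - γ - α) / (1 - γ))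
          * mhjbS lam θ₁ θ₂ t ^ (α / (α - 1))
          * mhjbD γ α lam θ₁ θ₂ t ^ (-(α / (α - 1))) = 0 := by
    intro t ht
    have hu := hmapsT t ht
    have hx1 := (hpos _ hu).1
    have hx2 := (hpos _ hu).2
    have hkey := EZaux.ez_algebra γ α lam Av ρ₁ (H (T - t)).1 (H (T - t)).2
      (-(EZaux.vf Av ρ₁ ρ₂ α lam mv (H (T - t))).1) hα0 hα1' hγ1' hx1 hx2 hl0 hl1
    rw [← hmv] at hkey
    simp only [mhjbC, mhjbS, mhjbD, hθ₁, hθ₂, hθ₁']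
    rw [← hAv]
    rw [hkey, EZaux.vf_fst]
    simp only [Prod.mk.eta]
    ring
  have hEq2 : ∀ t ∈ Set.Icc 0 T,
      θ₂' t + (1 - γ) * θ₂ t * (r + (μ - r) ^ 2 / (2 * γ * σ ^ 2) - mhjbC γ α lam θ₁ θ₂ t)
        - (1 - γ) * ρ₂ * α⁻¹ * θ₂ t
        + α⁻¹ * (1 - γ) * θ₂ t ^ ((1 - γ - α) / (1 - γ))
          * mhjbS lam θ₁ θ₂ t ^ (α / (α - 1))
          * mhjbD γ α lam θ₁ θ₂ t ^ (-(α / (α - 1))) = 0 := by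
    intro t ht
    have hu := hmapsT t ht
    have hx1 := (hpos _ hu).1
    have hx2 := (hpos _ hu).2
    have hkey := EZaux.ez_algebra₂ γ α lam Av ρ₂ (H (T - t)).1 (H (T - t)).2
      (-(EZaux.vf Av ρ₁ ρ₂ α lam mv (H (T - t))).2) hα0 hα1' hγ1' hx1 hx2 hl0 hl1
    rw [← hmv] at hkey
    simp only [mhjbC, mhjbS, mhjbD, hθ₁, hθ₂, hθ₂']
    rw [← hAv]
    rw [hkey, EZaux.vf_snd]
    simp only [Prod.mk.eta]
    ring
  refine ⟨θ₁, θ₂, ⟨θ₁', θ₂', hC1, hC2, hDer1, hDer2, hpos1, hpos2, hθ₁T, hθ₂T, hEq1, hEq2⟩, ?_⟩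
  -- Uniqueness
  intro φ₁ φ₂ hφ
  obtain ⟨φ₁', φ₂', hφc1, hφc2, hφd1, hφd2, hφp1, hφp2, hφT1, hφT2, heq1, heq2⟩ := hφ
  have hφ1cont : ContinuousOn φ₁ (Set.Icc 0 T) := fun s hs => (hφd1 s hs).continuousWithinAt
  have hφ2cont : ContinuousOn φ₂ (Set.Icc 0 T) := fun s hs => (hφd2 s hs).continuousWithinAt
  have hne : (Set.Icc (0:ℝ) T).Nonempty := ⟨0, le_refl 0, hT.le⟩
  obtain ⟨tm1, htm1, hmin1⟩ := isCompact_Icc.exists_isMinOn hne hφ1cont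
  obtain ⟨tM1, htM1, hmax1⟩ := isCompact_Icc.exists_isMaxOn hne hφ1cont
  obtain ⟨tm2, htm2, hmin2⟩ := isCompact_Icc.exists_isMinOn hne hφ2cont
  obtain ⟨tM2, htM2, hmax2⟩ := isCompact_Icc.exists_isMaxOn hne hφ2cont
  have hεφ0 : 0 < min (φ₁ tm1) (φ₂ tm2) := lt_min (hφp1 _ htm1) (hφp2 _ htm2)
  have hφ1b : ∀ u ∈ Set.Icc 0 T, min (φ₁ tm1) (φ₂ tm2) ≤ φ₁ u ∧ φ₁ u ≤ max (φ₁ tM1) (φ₂ tM2) :=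
    fun u hu => ⟨le_trans (min_le_left _ _) (hmin1 hu), le_trans (hmax1 hu) (le_max_left _ _)⟩
  have hφ2b : ∀ u ∈ Set.Icc 0 T, min (φ₁ tm1) (φ₂ tm2) ≤ φ₂ u ∧ φ₂ u ≤ max (φ₁ tM1) (φ₂ tM2) :=
    fun u hu => ⟨le_trans (min_le_right _ _) (hmin2 hu), le_trans (hmax2 hu) (le_max_right _ _)⟩
  set Ψ : ℝ → ℝ × ℝ := fun s => (φ₁ (T - s) ^ kv, φ₂ (T - s) ^ kv) with hΨ
  have hΨc : ContinuousOn Ψ (Set.Icc 0 T) := by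
    rw [hΨ]
    apply ContinuousOn.prodMk
    · exact (hφ1cont.comp (continuous_const.sub continuous_id).continuousOn hmapsT').rpow_const
        (fun t ht => Or.inl (ne_of_gt (hφp1 _ (hmapsT t ht))))
    · exact (hφ2cont.comp (continuous_const.sub continuous_id).continuousOn hmapsT').rpow_const
        (fun t ht => Or.inl (ne_of_gt (hφp2 _ (hmapsT t ht))))
  have hΨm : ∀ s ∈ Set.Icc 0 T, Ψ s ∈ Set.Icc
      ((min (φ₁ tm1) (φ₂ tm2)) ^ kv, (min (φ₁ tm1) (φ₂ tm2)) ^ kv)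
      ((max (φ₁ tM1) (φ₂ tM2)) ^ kv, (max (φ₁ tM1) (φ₂ tM2)) ^ kv) := by
    intro s hs
    have hu := hmapsT s hs
    constructor
    · exact ⟨Real.rpow_le_rpow hεφ0.le (hφ1b _ hu).1 hk0.le,
        Real.rpow_le_rpow hεφ0.le (hφ2b _ hu).1 hk0.le⟩
    · exact ⟨Real.rpow_le_rpow (le_trans hεφ0.le (hφ1b _ hu).1) (hφ1b _ hu).2 hk0.le,
        Real.rpow_le_rpow (le_trans hεφ0.le (hφ2b _ hu).1) (hφ2b _ hu).2 hk0.le⟩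
  -- derivative of Ψ with the vector field value
  have hΨd : ∀ s ∈ Set.Icc 0 T,
      HasDerivWithinAt Ψ (EZaux.vf Av ρ₁ ρ₂ α lam mv (Ψ s)) (Set.Icc 0 T) s := by
    intro s hs
    have hu := hmapsT s hs
    have hp1 : 0 < φ₁ (T - s) := hφp1 _ hu
    have hp2 : 0 < φ₂ (T - s) := hφp2 _ hu
    have hx1 : 0 < φ₁ (T - s) ^ kv := Real.rpow_pos_of_pos hp1 _
    have hx2 : 0 < φ₂ (T - s) ^ kv := Real.rpow_pos_of_pos hp2 _
    have hder1 : HasDerivWithinAt (fun u => φ₁ (T - u) ^ kv)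
        (-(kv * φ₁ (T - s) ^ (kv - 1) * φ₁' (T - s))) (Set.Icc 0 T) s :=
      EZaux.comp_rev_deriv hs (EZaux.rpow_deriv_chain hp1 (hφd1 _ hu))
    have hder2 : HasDerivWithinAt (fun u => φ₂ (T - u) ^ kv)
        (-(kv * φ₂ (T - s) ^ (kv - 1) * φ₂' (T - s))) (Set.Icc 0 T) s :=
      EZaux.comp_rev_deriv hs (EZaux.rpow_deriv_chain hp2 (hφd2 _ hu))
    have hpair := hder1.prodMk hder2
    have hx1m : (φ₁ (T - s) ^ kv) ^ mv = φ₁ (T - s) := by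
      rw [← Real.rpow_mul hp1.le, hkmv, Real.rpow_one]
    have hx2m : (φ₂ (T - s) ^ kv) ^ mv = φ₂ (T - s) := by
      rw [← Real.rpow_mul hp2.le, hkmv, Real.rpow_one]
    -- component 1 value
    have hmx1 : mv * (φ₁ (T - s) ^ kv) ^ (mv - 1) ≠ 0 :=
      ne_of_gt (mul_pos hm0 (Real.rpow_pos_of_pos hx1 _))
    have hmx2 : mv * (φ₂ (T - s) ^ kv) ^ (mv - 1) ≠ 0 :=
      ne_of_gt (mul_pos hm0 (Real.rpow_pos_of_pos hx2 _))
    have hφ'val1 : φ₁' (T - s) = mv * (φ₁ (T - s) ^ kv) ^ (mv - 1) *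
        (φ₁' (T - s) / (mv * (φ₁ (T - s) ^ kv) ^ (mv - 1))) := by
      field_simp
    have hφ'val2 : φ₂' (T - s) = mv * (φ₂ (T - s) ^ kv) ^ (mv - 1) *
        (φ₂' (T - s) / (mv * (φ₂ (T - s) ^ kv) ^ (mv - 1))) := by
      field_simp
    have hval1 : (EZaux.vf Av ρ₁ ρ₂ α lam mv (Ψ s)).1
        = -(kv * φ₁ (T - s) ^ (kv - 1) * φ₁' (T - s)) := by
      have hkey := EZaux.ez_algebra γ α lam Av ρ₁ (φ₁ (T - s) ^ kv) (φ₂ (T - s) ^ kv)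
        (φ₁' (T - s) / (mv * (φ₁ (T - s) ^ kv) ^ (mv - 1))) hα0 hα1' hγ1' hx1 hx2 hl0 hl1
      rw [← hmv] at hkey
      rw [hx1m, hx2m] at hkey
      have he := heq1 (T - s) hu
      simp only [mhjbC, mhjbS, mhjbD] at he
      rw [← hAv] at he
      rw [hφ'val1] at he
      rw [hkey] at he
      have hE := (mul_eq_zero.mp he).resolve_left hmx1
      have hcol := EZaux.collapse kv mv (φ₁ (T - s)) hp1 hkmv
      rw [show Ψ s = (φ₁ (T - s) ^ kv, φ₂ (T - s) ^ kv) from rfl, EZaux.vf_fst]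
      rw [hφ'val1]
      linear_combination (φ₁' (T - s) / (mv * (φ₁ (T - s) ^ kv) ^ (mv - 1))) * hcol + hE
    have hval2 : (EZaux.vf Av ρ₁ ρ₂ α lam mv (Ψ s)).2
        = -(kv * φ₂ (T - s) ^ (kv - 1) * φ₂' (T - s)) := by
      have hkey := EZaux.ez_algebra₂ γ α lam Av ρ₂ (φ₁ (T - s) ^ kv) (φ₂ (T - s) ^ kv)
        (φ₂' (T - s) / (mv * (φ₂ (T - s) ^ kv) ^ (mv - 1))) hα0 hα1' hγ1' hx1 hx2 hl0 hl1
      rw [← hmv] at hkey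
      rw [hx1m, hx2m] at hkey
      have he := heq2 (T - s) hu
      simp only [mhjbC, mhjbS, mhjbD] at he
      rw [← hAv] at he
      rw [hφ'val2] at he
      rw [hkey] at he
      have hE := (mul_eq_zero.mp he).resolve_left hmx2
      have hcol := EZaux.collapse kv mv (φ₂ (T - s)) hp2 hkmv
      rw [show Ψ s = (φ₁ (T - s) ^ kv, φ₂ (T - s) ^ kv) from rfl, EZaux.vf_snd]
      rw [hφ'val2]
      linear_combination (φ₂' (T - s) / (mv * (φ₂ (T - s) ^ kv) ^ (mv - 1))) * hcol + hE
    have hvv : EZaux.vf Av ρ₁ ρ₂ α lam mv (Ψ s)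
        = (-(kv * φ₁ (T - s) ^ (kv - 1) * φ₁' (T - s)),
           -(kv * φ₂ (T - s) ^ (kv - 1) * φ₂' (T - s))) := Prod.ext hval1 hval2
    rw [hvv]
    exact hpair
  -- apply uniqueness
  have h00 : Ψ 0 = H 0 := by
    rw [hΨ, hH0]
    show (φ₁ (T - 0) ^ kv, φ₂ (T - 0) ^ kv) = (1, 1)
    rw [sub_zero, hφT1, hφT2, Real.one_rpow]
  have hEqOn : Set.EqOn Ψ H (Set.Icc 0 T) := by
    apply EZaux.uniqueH Av ρ₁ ρ₂ α lam mv T hl0 hl1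
      (Real.rpow_pos_of_pos hεφ0 kv) hε hΨc hHcont
      (fun s hs => EZaux.hasDerivWithinAt_Ici_of_Icc hs (hΨd s (Set.Ico_subset_Icc_self hs)))
      (fun s hs => EZaux.hasDerivWithinAt_Ici_of_Icc hs (hHd s (Set.Ico_subset_Icc_self hs)))
      hΨm
      (fun s hs => ⟨⟨(hbox s hs).1, (hbox s hs).2.2.1⟩, ⟨(hbox s hs).2.1, (hbox s hs).2.2.2⟩⟩)
      h00
  constructor
  · intro t ht
    have hu := hmapsT t ht
    have h := congrArg Prod.fst (hEqOn hu)
    have hTt : T - (T - t) = t := by ring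
    rw [show Ψ (T - t) = (φ₁ (T - (T - t)) ^ kv, φ₂ (T - (T - t)) ^ kv) from rfl] at h
    simp only [hTt] at h
    show φ₁ t = θ₁ t
    rw [hθ₁]
    show φ₁ t = (H (T - t)).1 ^ mv
    rw [← h]
    show φ₁ t = (φ₁ t ^ kv) ^ mv
    rw [← Real.rpow_mul (hφp1 t ht).le, hkmv, Real.rpow_one]
  · intro t ht
    have hu := hmapsT t ht
    have h := congrArg Prod.snd (hEqOn hu)
    have hTt : T - (T - t) = t := by ring
    rw [show Ψ (T - t) = (φ₁ (T - (T - t)) ^ kv, φ₂ (T - (T - t)) ^ kv) from rfl] at h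
    simp only [hTt] at h
    show φ₂ t = θ₂ t
    rw [hθ₂]
    show φ₂ t = (H (T - t)).2 ^ mv
    rw [← h]
    show φ₂ t = (φ₂ t ^ kv) ^ mv
    rw [← Real.rpow_mul (hφp2 t ht).le, hkmv, Real.rpow_one]
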